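/- Let G be a finite interval graph with no universal vertex, let p be the number of maximal cliques of G, and let K be a clique of G. Then the number of distinct sets of the form N(v) ∖ K with v ∈ K is at most ⌊(p+1)/2⌋ · ⌈(p+1)/2⌉ − 1. -/

import Mathlib

open Finset

/-- A finset of vertices is independent (stable) in `G`. -/
def IndepSet {V : Type*} (G : SimpleGraph V) (S : Finset V) : Prop :=
  ∀ u ∈ S, ∀ v ∈ S, ¬ G.Adj u v

/-- A proper coloring of the subgraph of `G` induced by `A`:
a partition of `A` into independent sets (the color classes). -/
def IsProperColoring {V : Type*} [DecidableEq V] (G : SimpleGraph V) {A : Finset V}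
    (P : Finpartition A) : Prop :=
  ∀ S ∈ P.parts, IndepSet G S

/-- The weight of a coloring: the sum over color classes of the maximum weight in the class. -/
def colWeight {V : Type*} [DecidableEq V] {A : Finset V} (w : V → ℕ) (P : Finpartition A) : ℕ :=
  ∑ S ∈ P.parts, S.sup w

/-- The weighted chromatic number of the subgraph of `G` induced by the vertex set `A`. -/
noncomputable def sigmaOn {V : Type*} [DecidableEq V] (G : SimpleGraph V) (w : V → ℕ)
    (A : Finset V) : ℕ :=
  sInf { n | ∃ P : Finpartition A, IsProperColoring G P ∧ n = colWeight w P }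

/-- The weighted chromatic number `σ(G,w)`. -/
noncomputable def sigmaW {V : Type*} [Fintype V] [DecidableEq V] (G : SimpleGraph V)
    (w : V → ℕ) : ℕ :=
  sigmaOn G w Finset.univ

/-- An antimatching of `G`: a set of pairwise disjoint unordered pairs of distinct
non-adjacent vertices of `G` (equivalently, a matching of the complement of `G`). -/
def IsAntimatching {V : Type*} (G : SimpleGraph V) (M : Finset (Sym2 V)) : Prop :=
  (∀ e ∈ M, e ∈ Gᶜ.edgeSet) ∧
  ∀ e ∈ M, ∀ f ∈ M, e ≠ f → ∀ x, x ∈ e → x ∉ f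

/-- A maximum antimatching of `G`. -/
def IsMaxAntimatching {V : Type*} (G : SimpleGraph V) (M : Finset (Sym2 V)) : Prop :=
  IsAntimatching G M ∧ ∀ M' : Finset (Sym2 V), IsAntimatching G M' → M'.card ≤ M.card

/-- The set `V(M̄)` of vertices covered by the pairs of `M`. -/
def coveredVerts {V : Type*} [Fintype V] [DecidableEq V] (M : Finset (Sym2 V)) : Finset V :=
  Finset.univ.filter fun v => ∃ e ∈ M, v ∈ e

/-- `G` is an interval graph: vertices can be assigned nonempty closed real intervals so that
two distinct vertices are adjacent iff their intervals intersect. -/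
def IsIntervalGraph {V : Type*} (G : SimpleGraph V) : Prop :=
  ∃ f : V → ℝ × ℝ, (∀ v, (f v).1 ≤ (f v).2) ∧
    ∀ u v : V, G.Adj u v ↔
      u ≠ v ∧ (Set.Icc (f u).1 (f u).2 ∩ Set.Icc (f v).1 (f v).2).Nonempty

/-- in an interval graph with no universal vertex and `p` maximal cliques, the
vertices of a clique `K` have at most `⌊(p+1)/2⌋·⌈(p+1)/2⌉ - 1` distinct sets `N(v) ∖ K`. -/
lemma aux_mul_le {a b n : ℕ} (h : a + b ≤ n) : a * b ≤ n / 2 * ((n + 1) / 2) := by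
  set k := n / 2 with hk
  set m := (n + 1) / 2 with hm
  have hkm : k + m = n ∧ k ≤ m ∧ m ≤ k + 1 := by omega
  have helper : ∀ x y : ℕ, x + y ≤ k + m → x ≤ k → x * y ≤ k * m := by
    intro x y hxy hx
    have hy : y ≤ m + (k - x) := by omega
    calc x * y ≤ x * (m + (k - x)) := Nat.mul_le_mul_left _ hy
      _ = x * m + x * (k - x) := by ring
      _ ≤ x * m + m * (k - x) := by
          have hxm : x ≤ m := le_trans hx hkm.2.1
          exact Nat.add_le_add_left (Nat.mul_le_mul_right _ hxm) _
      _ = m * (x + (k - x)) := by ring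
      _ = m * k := by rw [Nat.add_sub_cancel' hx]
      _ = k * m := Nat.mul_comm _ _
  rcases le_or_gt a k with hak | hak
  · exact helper a b (by omega) hak
  · have hbk : b ≤ k := by omega
    have := helper b a (by omega) hbk
    rwa [Nat.mul_comm] at this

lemma aux_step {p : ℕ} (hp : 2 ≤ p) : p / 2 * ((p + 1) / 2) < (p + 1) / 2 * ((p + 2) / 2) := by
  rcases Nat.even_or_odd p with ⟨k, hk⟩ | ⟨k, hk⟩
  · subst hk
    have h1 : (k + k) / 2 = k := by omega
    have h2 : (k + k + 1) / 2 = k := by omega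
    have h3 : (k + k + 2) / 2 = k + 1 := by omega
    rw [h1, h2, h3]
    have hk1 : 1 ≤ k := by omega
    nlinarith
  · subst hk
    have h1 : (2 * k + 1) / 2 = k := by omega
    have h2 : (2 * k + 1 + 1) / 2 = k + 1 := by omega
    have h3 : (2 * k + 1 + 2) / 2 = k + 1 := by omega
    rw [h1, h2, h3]
    nlinarith

lemma chain_enum {β : Type*} [DecidableEq β] (K : Finset β) (hK : K.Nonempty)
    (S : β → Finset β) (hcomp : ∀ x ∈ K, ∀ y ∈ K, S x ⊆ S y ∨ S y ⊆ S x) :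
    ∃ v : ℕ → β, (∀ i < (K.image S).card, v i ∈ K) ∧
      (∀ i j, i < j → j < (K.image S).card → S (v i) ⊂ S (v j)) ∧
      (∀ x ∈ K, S x ⊆ S (v ((K.image S).card - 1))) := by
  classical
  set A := K.image S with hA
  set a := A.card with ha
  have hcompA : ∀ X ∈ A, ∀ Y ∈ A, X ⊆ Y ∨ Y ⊆ X := by
    intro X hX Y hY
    obtain ⟨x, hx, rfl⟩ := Finset.mem_image.mp hX
    obtain ⟨y, hy, rfl⟩ := Finset.mem_image.mp hY
    exact hcomp x hx y hy
  have hinj : Set.InjOn Finset.card (A : Set (Finset β)) := by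
    intro X hX Y hY hXY
    rcases hcompA X hX Y hY with h | h
    · exact Finset.eq_of_subset_of_card_le h (le_of_eq hXY.symm)
    · exact (Finset.eq_of_subset_of_card_le h (le_of_eq hXY)).symm
  set N := A.image Finset.card with hN
  have hNc : N.card = a := Finset.card_image_of_injOn hinj
  set e := N.orderEmbOfFin hNc with he
  have hex : ∀ i : Fin a, ∃ x, x ∈ K ∧ (S x).card = e i := by
    intro i
    have : (e i : ℕ) ∈ N := Finset.orderEmbOfFin_mem N hNc i
    obtain ⟨X, hX, hXc⟩ := Finset.mem_image.mp this
    obtain ⟨x, hx, rfl⟩ := Finset.mem_image.mp hX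
    exact ⟨x, hx, hXc⟩
  choose vf hvf1 hvf2 using hex
  have ha1 : 1 ≤ a := Finset.card_pos.mpr (hK.image S)
  refine ⟨fun i => if h : i < a then vf ⟨i, h⟩ else hK.choose, ?_, ?_, ?_⟩
  · intro i hi; simp only [dif_pos hi]; exact hvf1 _
  · intro i j hij hj
    have hi : i < a := lt_trans hij hj
    simp only [dif_pos hi, dif_pos hj]
    have hlt : (S (vf ⟨i, hi⟩)).card < (S (vf ⟨j, hj⟩)).card := by
      rw [hvf2 ⟨i, hi⟩, hvf2 ⟨j, hj⟩]
      exact (N.orderEmbOfFin hNc).strictMono (by exact hij)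
    have hsub : S (vf ⟨i, hi⟩) ⊆ S (vf ⟨j, hj⟩) := by
      rcases hcomp _ (hvf1 ⟨i, hi⟩) _ (hvf1 ⟨j, hj⟩) with h | h
      · exact h
      · exact absurd (Finset.card_le_card h) (by omega)
    exact Finset.ssubset_iff_subset_ne.mpr ⟨hsub, fun hE => by rw [hE] at hlt; omega⟩
  · intro x hx
    have hlast : a - 1 < a := by omega
    simp only [dif_pos hlast]
    have hmemN : (S x).card ∈ N := Finset.mem_image_of_mem _ (Finset.mem_image_of_mem _ hx)
    have : ∃ i : Fin a, e i = (S x).card := by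
      have := Finset.range_orderEmbOfFin N hNc
      have h2 : (S x).card ∈ Set.range (⇑e) := by rw [he, this]; exact hmemN
      exact h2
    obtain ⟨i, hi⟩ := this
    have hle : (S x).card ≤ (S (vf ⟨a - 1, hlast⟩)).card := by
      rw [hvf2 ⟨a - 1, hlast⟩, ← hi]
      have hia : (i : ℕ) ≤ a - 1 := by have := i.isLt; omega
      exact (N.orderEmbOfFin hNc).monotone (by simpa [Fin.le_def] using hia)
    rcases hcomp _ hx _ (hvf1 ⟨a - 1, hlast⟩) with h | h
    · exact h
    · exact le_of_eq (Finset.eq_of_subset_of_card_le h hle).symm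

lemma le_ncard_maximal_cliques {V : Type*} [Fintype V] [DecidableEq V] (G : SimpleGraph V)
    (m : ℕ) (Q : ℕ → Finset V) (hcl : ∀ i < m, G.IsClique (Q i : Set V))
    (hconf : ∀ i j, i < j → j < m → ∃ x ∈ Q i, ∃ y ∈ Q j, x ≠ y ∧ ¬ G.Adj x y) :
    m ≤ {s : Set V | Maximal G.IsClique s}.ncard := by
  classical
  have hext : ∀ i, ∃ s : Set V, i < m → (↑(Q i) ⊆ s ∧ Maximal G.IsClique s) := by
    intro i
    by_cases hi : i < m
    · obtain ⟨s, hs, hmax⟩ := Set.Finite.exists_maximalFor (id : Set V → Set V)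
        {t | G.IsClique t ∧ ↑(Q i) ⊆ t} (Set.toFinite _) ⟨↑(Q i), hcl i hi, subset_rfl⟩
      refine ⟨s, fun _ => ⟨hs.2, hs.1, ?_⟩⟩
      intro t ht hst
      exact hmax ⟨ht, hs.2.trans hst⟩ hst
    · exact ⟨∅, fun h => absurd h hi⟩
  choose M hM using hext
  have hinj : Set.InjOn M (Finset.range m : Set ℕ) := by
    intro i hi j hj hij
    simp only [Finset.coe_range, Set.mem_Iio] at hi hj
    by_contra hne
    rcases Nat.lt_or_ge i j with h | h
    · obtain ⟨x, hx, y, hy, hxy, hnadj⟩ := hconf i j h hj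
      have hxM : x ∈ M i := (hM i hi).1 hx
      have hyM : y ∈ M i := by rw [hij]; exact (hM j hj).1 hy
      exact hnadj (((hM i hi).2.1) hxM hyM hxy)
    · have h' : j < i := by omega
      obtain ⟨x, hx, y, hy, hxy, hnadj⟩ := hconf j i h' hi
      have hxM : x ∈ M i := by rw [hij]; exact (hM j hj).1 hx
      have hyM : y ∈ M i := (hM i hi).1 hy
      exact hnadj (((hM i hi).2.1) hxM hyM hxy)
  have hcard : ((Finset.range m).image M).card = m := by
    rw [Finset.card_image_of_injOn hinj, Finset.card_range]
  have hsub : (((Finset.range m).image M : Finset (Set V)) : Set (Set V)) ⊆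
      {s : Set V | Maximal G.IsClique s} := by
    intro s hs
    simp only [Finset.coe_image, Set.mem_image] at hs
    obtain ⟨i, hi, rfl⟩ := hs
    simp only [Finset.coe_range, Set.mem_Iio] at hi
    exact (hM i hi).2
  calc m = ((Finset.range m).image M).card := hcard.symm
    _ = (((Finset.range m).image M : Finset (Set V)) : Set (Set V)).ncard :=
        (Set.ncard_coe_finset _).symm
    _ ≤ _ := Set.ncard_le_ncard hsub (Set.toFinite _)

theorem interval_clique_neighborhood_classes
    {V : Type*} [Fintype V] [DecidableEq V] (G : SimpleGraph V) [DecidableRel G.Adj]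
    (hint : IsIntervalGraph G)
    (hnouniv : ¬ ∃ u : V, ∀ v : V, v ≠ u → G.Adj u v)
    (p : ℕ) (hp : {s : Set V | Maximal G.IsClique s}.ncard = p)
    (K : Finset V) (hclique : G.IsClique (K : Set V)) :
    (K.image fun v => G.neighborFinset v \ K).card ≤ (p + 1) / 2 * ((p + 2) / 2) - 1 := by
  classical
  obtain ⟨f, hf1, hf2⟩ := hint
  set l : V → ℝ := fun v => (f v).1 with hl
  set r : V → ℝ := fun v => (f v).2 with hr
  have hadj : ∀ x y : V, G.Adj x y ↔ x ≠ y ∧ l x ≤ r y ∧ l y ≤ r x := by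
    intro x y
    rw [hf2, Set.Icc_inter_Icc, Set.nonempty_Icc]
    constructor
    · rintro ⟨hne, h⟩
      simp only [sup_le_iff, le_inf_iff] at h
      exact ⟨hne, h.2.1, h.1.2⟩
    · rintro ⟨hne, h1, h2⟩
      refine ⟨hne, ?_⟩
      simp only [sup_le_iff, le_inf_iff]
      exact ⟨⟨hf1 x, h2⟩, h1, hf1 y⟩
  rcases K.eq_empty_or_nonempty with hKe | hK
  · simp [hKe]
  set F1 : V → Finset V := fun x => univ.filter fun u => u ∉ K ∧ l u ≤ r x with hF1d
  set F2 : V → Finset V := fun x => univ.filter fun u => u ∉ K ∧ l x ≤ r u with hF2d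
  have hmF1 : ∀ x u, u ∈ F1 x ↔ u ∉ K ∧ l u ≤ r x := by intro x u; simp [hF1d]
  have hmF2 : ∀ x u, u ∈ F2 x ↔ u ∉ K ∧ l x ≤ r u := by intro x u; simp [hF2d]
  have htr : ∀ x ∈ K, ∀ y ∈ K, l y ≤ r x := by
    intro x hx y hy
    by_cases hxy : y = x
    · subst hxy; exact hf1 y
    · exact ((hadj y x).mp (hclique (Finset.mem_coe.mpr hy) (Finset.mem_coe.mpr hx) hxy)).2.1
  set t := K.sup' hK l with ht
  have htle : ∀ x ∈ K, l x ≤ t := fun x hx => Finset.le_sup' l hx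
  have hter : ∀ x ∈ K, t ≤ r x := fun x hx => Finset.sup'_le hK l (fun y hy => htr x hx y hy)
  have hcomp1 : ∀ x ∈ K, ∀ y ∈ K, F1 x ⊆ F1 y ∨ F1 y ⊆ F1 x := by
    intro x _ y _
    rcases le_total (r x) (r y) with h | h
    · left; intro uu huu; rw [hmF1] at huu ⊢; exact ⟨huu.1, huu.2.trans h⟩
    · right; intro uu huu; rw [hmF1] at huu ⊢; exact ⟨huu.1, huu.2.trans h⟩
  have hcomp2 : ∀ x ∈ K, ∀ y ∈ K, F2 x ⊆ F2 y ∨ F2 y ⊆ F2 x := by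
    intro x _ y _
    rcases le_total (l x) (l y) with h | h
    · right; intro uu huu; rw [hmF2] at huu ⊢; exact ⟨huu.1, h.trans huu.2⟩
    · left; intro uu huu; rw [hmF2] at huu ⊢; exact ⟨huu.1, h.trans huu.2⟩
  obtain ⟨v, hv1, hv2, hv3⟩ := chain_enum K hK F1 hcomp1
  obtain ⟨w, hw1, hw2, hw3⟩ := chain_enum K hK F2 hcomp2
  set a := (K.image F1).card with hadef
  set b := (K.image F2).card with hbdef
  have ha1 : 1 ≤ a := Finset.card_pos.mpr (hK.image _)
  have hb1 : 1 ≤ b := Finset.card_pos.mpr (hK.image _)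
  have hrv : ∀ i j, i ≤ j → j < a → r (v i) ≤ r (v j) := by
    intro i j hij hj
    rcases eq_or_lt_of_le hij with rfl | h
    · exact le_refl _
    · by_contra hc
      push_neg at hc
      have hsub : F1 (v j) ⊆ F1 (v i) := by
        intro uu huu; rw [hmF1] at huu ⊢; exact ⟨huu.1, huu.2.trans hc.le⟩
      exact (hv2 i j h hj).not_subset hsub
  have hlw : ∀ i j, i ≤ j → j < b → l (w j) ≤ l (w i) := by
    intro i j hij hj
    rcases eq_or_lt_of_le hij with rfl | h
    · exact le_refl _
    · by_contra hc
      push_neg at hc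
      have hsub : F2 (w j) ⊆ F2 (w i) := by
        intro uu huu; rw [hmF2] at huu ⊢; exact ⟨huu.1, hc.le.trans huu.2⟩
      exact (hw2 i j h hj).not_subset hsub
  have huex : ∀ i, ∃ x, i + 1 < a → (x ∉ K ∧ r (v i) < l x ∧ l x ≤ r (v (i+1))) := by
    intro i
    by_cases hi : i + 1 < a
    · obtain ⟨x, hxin, hxout⟩ := Finset.exists_of_ssubset (hv2 i (i+1) (lt_add_one i) hi)
      rw [hmF1] at hxin
      refine ⟨x, fun _ => ⟨hxin.1, ?_, hxin.2⟩⟩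
      by_contra hc
      push_neg at hc
      exact hxout ((hmF1 _ _).mpr ⟨hxin.1, hc⟩)
    · exact ⟨hK.choose, fun h => absurd h hi⟩
  choose u hu using huex
  have hzex : ∀ j, ∃ x, j + 1 < b → (x ∉ K ∧ l (w (j+1)) ≤ r x ∧ r x < l (w j)) := by
    intro j
    by_cases hj : j + 1 < b
    · obtain ⟨x, hxin, hxout⟩ := Finset.exists_of_ssubset (hw2 j (j+1) (lt_add_one j) hj)
      rw [hmF2] at hxin
      refine ⟨x, fun _ => ⟨hxin.1, hxin.2, ?_⟩⟩
      by_contra hc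
      push_neg at hc
      exact hxout ((hmF2 _ _).mpr ⟨hxin.1, hc⟩)
    · exact ⟨hK.choose, fun h => absurd h hj⟩
  choose z hz using hzex
  set Q : ℕ → Finset V := fun i =>
    if i = 0 then K
    else if i < a then insert (u (i-1)) (K.filter fun x => l (u (i-1)) ≤ r x)
    else insert (z (i-a)) (K.filter fun x => l x ≤ r (z (i-a))) with hQd
  have hQ0 : Q 0 = K := by simp [hQd]
  have hQR : ∀ i, 1 ≤ i → i < a →
      Q i = insert (u (i-1)) (K.filter fun x => l (u (i-1)) ≤ r x) := by
    intro i h1 h2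
    simp only [hQd]
    rw [if_neg (by omega), if_pos h2]
  have hQL : ∀ i, a ≤ i → Q i = insert (z (i-a)) (K.filter fun x => l x ≤ r (z (i-a))) := by
    intro i hi
    simp only [hQd]
    rw [if_neg (by omega), if_neg (by omega)]
  have hvinQ : ∀ i < a, v i ∈ Q i := by
    intro i hi
    rcases Nat.eq_zero_or_pos i with rfl | h1
    · rw [hQ0]; exact hv1 0 hi
    · rw [hQR i h1 hi]
      have hi1 : i - 1 + 1 = i := by omega
      have h := hu (i-1) (by omega)
      apply Finset.mem_insert_of_mem
      refine Finset.mem_filter.mpr ⟨hv1 i hi, ?_⟩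
      have h2 := h.2.2
      rwa [hi1] at h2
  have hwinQ : ∀ i, a ≤ i → i + 1 < a + b → w (i - a + 1) ∈ Q i := by
    intro i hi hib
    rw [hQL i hi]
    apply Finset.mem_insert_of_mem
    have hq : (i-a) + 1 < b := by omega
    exact Finset.mem_filter.mpr ⟨hw1 _ (by omega), (hz (i-a) hq).2.1⟩
  have hQcl : ∀ i < a + b - 1, G.IsClique (Q i : Set V) := by
    intro i hi
    rcases Nat.eq_zero_or_pos i with rfl | h1
    · rw [hQ0]; exact hclique
    · by_cases hia : i < a
      · rw [hQR i h1 hia]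
        have hi1 : i - 1 + 1 = i := by omega
        have hud := hu (i-1) (by omega)
        intro x hx y hy hne
        simp only [Finset.coe_insert, Set.mem_insert_iff, Finset.mem_coe,
          Finset.mem_filter] at hx hy
        have key : ∀ q, q ∈ K → l (u (i-1)) ≤ r q → G.Adj (u (i-1)) q := by
          intro q hq hlq
          rw [hadj]
          refine ⟨fun hE => hud.1 (hE ▸ hq), hlq, ?_⟩
          have e1 : l q ≤ t := htle q hq
          have e2 : t ≤ r (v (i-1)) := hter _ (hv1 _ (by omega))
          have e3 : r (v (i-1)) < l (u (i-1)) := hud.2.1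
          have e4 : l (u (i-1)) ≤ r (u (i-1)) := hf1 _
          linarith
        rcases hx with rfl | hx
        · rcases hy with rfl | hy
          · exact absurd rfl hne
          · exact key y hy.1 hy.2
        · rcases hy with rfl | hy
          · exact (key x hx.1 hx.2).symm
          · exact hclique (Finset.mem_coe.mpr hx.1) (Finset.mem_coe.mpr hy.1) hne
      · rw [hQL i (le_of_not_gt hia)]
        have hq : (i-a) + 1 < b := by omega
        have hzd := hz (i-a) hq
        intro x hx y hy hne
        simp only [Finset.coe_insert, Set.mem_insert_iff, Finset.mem_coe,
          Finset.mem_filter] at hx hy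
        have key : ∀ q, q ∈ K → l q ≤ r (z (i-a)) → G.Adj (z (i-a)) q := by
          intro q hq' hlq
          rw [hadj]
          refine ⟨fun hE => hzd.1 (hE ▸ hq'), ?_, hlq⟩
          have e1 : l (z (i-a)) ≤ r (z (i-a)) := hf1 _
          have e2 : r (z (i-a)) < l (w (i-a)) := hzd.2.2
          have e3 : l (w (i-a)) ≤ t := htle _ (hw1 _ (by omega))
          have e4 : t ≤ r q := hter q hq'
          linarith
        rcases hx with rfl | hx
        · rcases hy with rfl | hy
          · exact absurd rfl hne
          · exact key y hy.1 hy.2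
        · rcases hy with rfl | hy
          · exact (key x hx.1 hx.2).symm
          · exact hclique (Finset.mem_coe.mpr hx.1) (Finset.mem_coe.mpr hy.1) hne
  have hconf : ∀ i j, i < j → j < a + b - 1 →
      ∃ x ∈ Q i, ∃ y ∈ Q j, x ≠ y ∧ ¬ G.Adj x y := by
    intro i j hij hj
    by_cases hja : j < a
    · have hj1 : 1 ≤ j := by omega
      have hj1' : j - 1 + 1 = j := by omega
      have hjd := hu (j-1) (by omega)
      refine ⟨v i, hvinQ i (by omega), u (j-1), ?_, ?_, ?_⟩
      · rw [hQR j hj1 hja]; exact Finset.mem_insert_self _ _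
      · exact fun h => hjd.1 (h ▸ hv1 i (by omega))
      · have h1 : r (v i) ≤ r (v (j-1)) := hrv i (j-1) (by omega) (by omega)
        have h2 := hjd.2.1
        rw [hadj]
        rintro ⟨-, -, h3⟩
        linarith
    · have hq : (j - a) + 1 < b := by omega
      have hzd := hz (j - a) hq
      by_cases hia : i < a
      · rcases Nat.eq_zero_or_pos i with rfl | h1
        · refine ⟨w (j-a), ?_, z (j-a), ?_, ?_, ?_⟩
          · rw [hQ0]; exact hw1 _ (by omega)
          · rw [hQL j (by omega)]; exact Finset.mem_insert_self _ _
          · exact fun h => hzd.1 (h ▸ hw1 _ (by omega))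
          · rw [hadj]
            rintro ⟨-, h2, -⟩
            have := hzd.2.2
            linarith
        · have hid := hu (i-1) (by omega)
          have h1' : r (z (j-a)) < l (w (j-a)) := hzd.2.2
          have h2 : l (w (j-a)) ≤ t := htle _ (hw1 _ (by omega))
          have h3 : t ≤ r (v (i-1)) := hter _ (hv1 _ (by omega))
          have h4 : r (v (i-1)) < l (u (i-1)) := hid.2.1
          have h5 : l (u (i-1)) ≤ r (u (i-1)) := hf1 _
          refine ⟨u (i-1), ?_, z (j-a), ?_, ?_, ?_⟩
          · rw [hQR i h1 hia]; exact Finset.mem_insert_self _ _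
          · rw [hQL j (by omega)]; exact Finset.mem_insert_self _ _
          · intro h
            have h6 : r (u (i-1)) = r (z (j-a)) := by rw [h]
            linarith
          · rw [hadj]
            rintro ⟨-, hcon, -⟩
            linarith
      · refine ⟨w (i-a+1), hwinQ i (by omega) (by omega), z (j-a), ?_, ?_, ?_⟩
        · rw [hQL j (by omega)]; exact Finset.mem_insert_self _ _
        · exact fun h => hzd.1 (h ▸ hw1 _ (by omega))
        · have h1 : l (w (j-a)) ≤ l (w (i-a+1)) := hlw (i-a+1) (j-a) (by omega) (by omega)
          have h2 : r (z (j-a)) < l (w (j-a)) := hzd.2.2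
          rw [hadj]
          rintro ⟨-, hcon, -⟩
          linarith
  have hp1 : a + b - 1 ≤ p := by
    rw [← hp]; exact le_ncard_maximal_cliques G (a+b-1) Q hQcl hconf
  have himg : (K.image fun x => G.neighborFinset x \ K)
      = (K.image fun x => (F1 x, F2 x)).image (fun pr => pr.1 ∩ pr.2) := by
    rw [Finset.image_image]
    apply Finset.image_congr
    intro x hx
    simp only [Function.comp]
    ext uu
    simp only [Finset.mem_sdiff, SimpleGraph.mem_neighborFinset, Finset.mem_inter, hmF1, hmF2,
      hadj]
    constructor
    · rintro ⟨⟨hne, h1, h2⟩, hnK⟩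
      exact ⟨⟨hnK, h2⟩, hnK, h1⟩
    · rintro ⟨⟨hnK, h2⟩, -, h1⟩
      exact ⟨⟨fun hE => hnK (hE ▸ (Finset.mem_coe.mp hx)), h1, h2⟩, hnK⟩
  set Amax := F1 (v (a-1)) with hAm
  set Bmax := F2 (w (b-1)) with hBm
  by_cases hc2 : ∃ x ∈ K, F1 x = Amax ∧ F2 x = Bmax
  · obtain ⟨x, hxK, hxA, hxB⟩ := hc2
    have hnu : ∃ y, y ∉ K ∧ ∀ s ∈ K, ¬ G.Adj s y := by
      push_neg at hnouniv
      obtain ⟨y, hyne, hynadj⟩ := hnouniv x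
      have hyK : y ∉ K := fun hyK' =>
        hynadj (hclique (Finset.mem_coe.mpr hxK) (Finset.mem_coe.mpr hyK') hyne.symm)
      rw [hadj] at hynadj
      push_neg at hynadj
      rcases le_or_gt (l x) (r y) with hca | hca
      · have hry : r x < l y := hynadj hyne.symm hca
        refine ⟨y, hyK, ?_⟩
        intro s hs
        have hyA : y ∉ F1 x := by
          rw [hmF1]
          rintro ⟨-, hc⟩
          linarith
        have hsA : y ∉ F1 s := fun hin => hyA (by rw [hxA]; exact hv3 s hs hin)
        rw [hmF1] at hsA
        push_neg at hsA
        have hys := hsA hyK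
        rw [hadj]
        rintro ⟨-, -, hc⟩
        linarith
      · refine ⟨y, hyK, ?_⟩
        intro s hs
        have hyB : y ∉ F2 x := by
          rw [hmF2]
          rintro ⟨-, hc⟩
          linarith
        have hsB : y ∉ F2 s := fun hin => hyB (by rw [hxB]; exact hw3 s hs hin)
        rw [hmF2] at hsB
        push_neg at hsB
        have hys := hsB hyK
        rw [hadj]
        rintro ⟨-, hc, -⟩
        linarith
    obtain ⟨y, hyK, hynadj⟩ := hnu
    set Q2 : ℕ → Finset V := fun i => if i < a + b - 1 then Q i else {y} with hQ2
    have hcl2 : ∀ i < a + b, G.IsClique (Q2 i : Set V) := by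
      intro i _
      by_cases h : i < a + b - 1
      · simp only [hQ2, if_pos h]; exact hQcl i h
      · simp only [hQ2, if_neg h]
        intro p1 hp1' p2 hp2' hne
        simp only [Finset.coe_singleton, Set.mem_singleton_iff] at hp1' hp2'
        subst hp1'; subst hp2'
        exact absurd rfl hne
    have hconf2 : ∀ i j, i < j → j < a + b →
        ∃ x' ∈ Q2 i, ∃ y' ∈ Q2 j, x' ≠ y' ∧ ¬ G.Adj x' y' := by
      intro i j hij hj
      by_cases h : j < a + b - 1
      · simp only [hQ2, if_pos (lt_trans hij h), if_pos h]
        exact hconf i j hij h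
      · simp only [hQ2, if_pos (show i < a + b - 1 by omega), if_neg h]
        have hxKex : ∃ x' ∈ Q i, x' ∈ K := by
          by_cases hia : i < a
          · exact ⟨v i, hvinQ i hia, hv1 i hia⟩
          · exact ⟨w (i-a+1), hwinQ i (by omega) (by omega), hw1 _ (by omega)⟩
        obtain ⟨x0, hx0Q, hx0K⟩ := hxKex
        exact ⟨x0, hx0Q, y, Finset.mem_singleton_self y,
          fun h' => hyK (h' ▸ hx0K), hynadj x0 hx0K⟩
    have hp2 : a + b ≤ p := by
      rw [← hp]; exact le_ncard_maximal_cliques G (a+b) Q2 hcl2 hconf2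
    have hcard1 : (K.image fun x => G.neighborFinset x \ K).card ≤ a * b := by
      rw [himg]
      calc ((K.image fun x => (F1 x, F2 x)).image (fun pr => pr.1 ∩ pr.2)).card
          ≤ (K.image fun x => (F1 x, F2 x)).card := Finset.card_image_le
        _ ≤ ((K.image F1) ×ˢ (K.image F2)).card := by
            apply Finset.card_le_card
            intro pr hpr
            obtain ⟨x', hx', rfl⟩ := Finset.mem_image.mp hpr
            exact Finset.mem_product.mpr
              ⟨Finset.mem_image_of_mem _ hx', Finset.mem_image_of_mem _ hx'⟩
        _ = a * b := by rw [Finset.card_product]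
    have h2p : 2 ≤ p := by omega
    have hmul := aux_mul_le (n := p) (show a + b ≤ p from hp2)
    have hstep := aux_step h2p
    calc (K.image fun x => G.neighborFinset x \ K).card ≤ a * b := hcard1
      _ ≤ p / 2 * ((p + 1) / 2) := hmul
      _ ≤ (p + 1) / 2 * ((p + 2) / 2) - 1 := Nat.le_sub_one_of_lt hstep
  · have hcard1 : (K.image fun x => G.neighborFinset x \ K).card ≤ a * b - 1 := by
      rw [himg]
      have hsub : (K.image fun x => (F1 x, F2 x))
          ⊆ ((K.image F1) ×ˢ (K.image F2)).erase (Amax, Bmax) := by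
        intro pr hpr
        obtain ⟨x', hx', rfl⟩ := Finset.mem_image.mp hpr
        refine Finset.mem_erase.mpr ⟨?_, Finset.mem_product.mpr
          ⟨Finset.mem_image_of_mem _ hx', Finset.mem_image_of_mem _ hx'⟩⟩
        intro hE
        rw [Prod.ext_iff] at hE
        exact hc2 ⟨x', hx', hE.1, hE.2⟩
      have hAmem : (Amax, Bmax) ∈ (K.image F1) ×ˢ (K.image F2) :=
        Finset.mem_product.mpr ⟨Finset.mem_image_of_mem _ (hv1 (a-1) (by omega)),
          Finset.mem_image_of_mem _ (hw1 (b-1) (by omega))⟩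
      calc ((K.image fun x => (F1 x, F2 x)).image (fun pr => pr.1 ∩ pr.2)).card
          ≤ (K.image fun x => (F1 x, F2 x)).card := Finset.card_image_le
        _ ≤ (((K.image F1) ×ˢ (K.image F2)).erase (Amax, Bmax)).card :=
            Finset.card_le_card hsub
        _ = a * b - 1 := by rw [Finset.card_erase_of_mem hAmem, Finset.card_product]
    have hmul := aux_mul_le (n := p+1) (show a + b ≤ p + 1 by omega)
    calc (K.image fun x => G.neighborFinset x \ K).card ≤ a * b - 1 := hcard1
      _ ≤ (p + 1) / 2 * ((p + 2) / 2) - 1 := Nat.sub_le_sub_right hmul 1
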